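/- Define G_k(x) = (−1)ᵏ e^{x²} (dᵏ/dxᵏ)(e^{−x²}) for k ∈ ℕ. Then for every k ≥ 1, ∫_{ℝ} x³·G_{k−1}(x)·G_k(x)·e^{−x²} dx = 3k·2^{k−2}·k!·√π. -/

import Mathlib

open MeasureTheory

/-- The `k`-th physicists' Hermite polynomial `G_k(x) = (-1)^k e^{x²} (d^k/dx^k)(e^{-x²})`. -/
noncomputable def hermiteG (k : ℕ) (x : ℝ) : ℝ :=
  (-1) ^ k * Real.exp (x ^ 2) * iteratedDeriv k (fun y => Real.exp (-y ^ 2)) x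

open Polynomial in
/-- physicists' Hermite polynomials -/
noncomputable def physP : ℕ → Polynomial ℝ
  | 0 => 1
  | n + 1 => C 2 * X * physP n - derivative (physP n)

open Polynomial

lemma physP_zero : physP 0 = 1 := rfl
lemma physP_succ (n : ℕ) :
    physP (n + 1) = C 2 * X * physP n - derivative (physP n) := rfl

lemma physP_one : physP 1 = C 2 * X := by
  simp [physP_succ, physP_zero]

lemma natDegree_physP (n : ℕ) : (physP n).natDegree ≤ n := by
  induction n with
  | zero => simp [physP_zero]
  | succ n ih =>
      rw [physP_succ]
      refine (natDegree_sub_le _ _).trans ?_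
      have h1 : (C (2:ℝ) * X * physP n).natDegree ≤ n + 1 := by
        refine natDegree_mul_le.trans ?_
        have h : (C (2:ℝ) * X).natDegree ≤ 1 := (natDegree_C_mul_le _ _).trans natDegree_X_le
        omega
      have h2 : (derivative (physP n)).natDegree ≤ n + 1 :=
        (natDegree_derivative_le _).trans (by omega)
      omega

lemma coeff_physP_of_gt {n m : ℕ} (h : n < m) : (physP n).coeff m = 0 :=
  coeff_eq_zero_of_natDegree_lt (lt_of_le_of_lt (natDegree_physP n) h)

lemma coeff_physP_self (n : ℕ) : (physP n).coeff n = 2 ^ n := by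
  induction n with
  | zero => simp [physP_zero]
  | succ n ih =>
      rw [physP_succ, coeff_sub, coeff_derivative, mul_assoc, coeff_C_mul, coeff_X_mul, ih,
        coeff_physP_of_gt (by omega)]
      ring

lemma coeff_physP_sub_one (n : ℕ) : (physP (n + 1)).coeff n = 0 := by
  induction n with
  | zero => simp [physP_one]
  | succ n ih =>
      rw [physP_succ, coeff_sub, coeff_derivative, mul_assoc, coeff_C_mul, coeff_X_mul, ih,
        coeff_physP_of_gt (by omega)]
      ring

lemma coeff_physP_sub_two (n : ℕ) :
    (physP (n + 2)).coeff n = -((n : ℝ) + 2) * ((n : ℝ) + 1) * 2 ^ n := by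
  induction n with
  | zero =>
      have h : physP 2 = C 2 * X * (C 2 * X) - C 2 := by
        rw [physP_succ, physP_one]; simp
      rw [h]
      simp [mul_coeff_zero]
  | succ n ih =>
      rw [physP_succ, coeff_sub, coeff_derivative, mul_assoc, coeff_C_mul, coeff_X_mul, ih,
        coeff_physP_self]
      push_cast
      ring

lemma hasDerivAt_physP_gauss (n : ℕ) (x : ℝ) :
    HasDerivAt (fun x : ℝ => (physP n).eval x * Real.exp (-x ^ 2))
      (-((physP (n + 1)).eval x * Real.exp (-x ^ 2))) x := by
  have hg : HasDerivAt (fun x : ℝ => Real.exp (-x ^ 2))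
      (Real.exp (-x ^ 2) * -(↑2 * x ^ 1)) x := ((hasDerivAt_pow 2 x).neg).exp
  have h := ((physP n).hasDerivAt x).mul hg
  refine h.congr_deriv ?_
  rw [physP_succ]
  simp only [eval_sub, eval_mul, eval_C, eval_X]
  ring

lemma rodrigues (n : ℕ) (x : ℝ) :
    iteratedDeriv n (fun y : ℝ => Real.exp (-y ^ 2)) x
      = (-1 : ℝ) ^ n * ((physP n).eval x * Real.exp (-x ^ 2)) := by
  induction n generalizing x with
  | zero => simp [physP_zero]
  | succ n ih =>
      rw [iteratedDeriv_succ]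
      have hfun : iteratedDeriv n (fun y : ℝ => Real.exp (-y ^ 2))
          = fun x => (-1 : ℝ) ^ n * ((physP n).eval x * Real.exp (-x ^ 2)) := funext ih
      rw [hfun]
      have h := ((hasDerivAt_physP_gauss n x).const_mul ((-1 : ℝ) ^ n)).deriv
      rw [h, pow_succ]
      ring

lemma hermiteG_eq (n : ℕ) (x : ℝ) : hermiteG n x = (physP n).eval x := by
  unfold hermiteG
  rw [rodrigues]
  have h1 : ((-1 : ℝ) ^ n) * (-1 : ℝ) ^ n = 1 := by
    rw [← pow_add]
    exact Even.neg_one_pow ⟨n, by ring⟩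
  have h2 : Real.exp (x ^ 2) * Real.exp (-x ^ 2) = 1 := by
    rw [← Real.exp_add]; simp
  calc (-1 : ℝ) ^ n * Real.exp (x ^ 2) * ((-1 : ℝ) ^ n * ((physP n).eval x * Real.exp (-x ^ 2)))
      = ((-1 : ℝ) ^ n * (-1 : ℝ) ^ n) * (Real.exp (x ^ 2) * Real.exp (-x ^ 2))
        * (physP n).eval x := by ring
    _ = (physP n).eval x := by rw [h1, h2]; ring

lemma integrable_pow_gauss (n : ℕ) :
    Integrable (fun x : ℝ => x ^ n * Real.exp (-x ^ 2)) := by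
  have h := integrable_rpow_mul_exp_neg_mul_sq (b := 1) one_pos
      (s := (n : ℝ)) (neg_one_lt_zero.trans_le (Nat.cast_nonneg n))
  refine h.congr ?_
  filter_upwards with x
  rw [Real.rpow_natCast]
  norm_num

lemma integrable_poly_gauss (p : Polynomial ℝ) :
    Integrable (fun x : ℝ => p.eval x * Real.exp (-x ^ 2)) := by
  induction p using Polynomial.induction_on' with
  | add p q hp hq =>
      refine (hp.add hq).congr ?_
      filter_upwards with x
      simp [add_mul]
  | monomial n a =>
      refine ((integrable_pow_gauss n).const_mul a).congr ?_
      filter_upwards with x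
      simp [mul_assoc]

lemma ibp_step (q : Polynomial ℝ) (n : ℕ) :
    ∫ x : ℝ, q.eval x * ((physP (n + 1)).eval x * Real.exp (-x ^ 2))
      = ∫ x : ℝ, (derivative q).eval x * ((physP n).eval x * Real.exp (-x ^ 2)) := by
  have h1 : Integrable ((fun x : ℝ => q.eval x)
      * (fun x : ℝ => -((physP (n + 1)).eval x * Real.exp (-x ^ 2)))) := by
    refine ((integrable_poly_gauss (q * physP (n + 1))).neg).congr ?_
    filter_upwards with x
    simp only [Pi.mul_apply, Pi.neg_apply, eval_mul]; ring
  have h2 : Integrable ((fun x : ℝ => (derivative q).eval x)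
      * (fun x : ℝ => (physP n).eval x * Real.exp (-x ^ 2))) := by
    refine (integrable_poly_gauss (derivative q * physP n)).congr ?_
    filter_upwards with x
    simp only [Pi.mul_apply, eval_mul]; ring
  have h3 : Integrable ((fun x : ℝ => q.eval x)
      * (fun x : ℝ => (physP n).eval x * Real.exp (-x ^ 2))) := by
    refine (integrable_poly_gauss (q * physP n)).congr ?_
    filter_upwards with x
    simp only [Pi.mul_apply, eval_mul]; ring
  have h := MeasureTheory.integral_mul_deriv_eq_deriv_mul_of_integrable
    (u := fun x : ℝ => q.eval x) (u' := fun x : ℝ => (derivative q).eval x)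
    (v := fun x : ℝ => (physP n).eval x * Real.exp (-x ^ 2))
    (v' := fun x : ℝ => -((physP (n + 1)).eval x * Real.exp (-x ^ 2)))
    (fun x _ => q.hasDerivAt x) (fun x _ => hasDerivAt_physP_gauss n x) h1 h2 h3
  have h' : ∫ x : ℝ, -(q.eval x * ((physP (n + 1)).eval x * Real.exp (-x ^ 2)))
      = -∫ x : ℝ, (derivative q).eval x * ((physP n).eval x * Real.exp (-x ^ 2)) := by
    simpa [mul_neg] using h
  rw [integral_neg] at h'
  linarith [h']

lemma ibp_iter (n : ℕ) : ∀ q : Polynomial ℝ,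
    ∫ x : ℝ, q.eval x * ((physP n).eval x * Real.exp (-x ^ 2))
      = ∫ x : ℝ, (derivative^[n] q).eval x * Real.exp (-x ^ 2) := by
  induction n with
  | zero => intro q; simp [physP_zero]
  | succ n ih =>
      intro q
      rw [ibp_step q n, ih (derivative q), Function.iterate_succ_apply]

lemma integral_gauss : ∫ x : ℝ, Real.exp (-x ^ 2) = Real.sqrt Real.pi := by
  have h := integral_gaussian 1
  simpa using h

lemma integral_x_gauss : ∫ x : ℝ, x * Real.exp (-x ^ 2) = 0 := by
  have h := ibp_iter 1 (C (1/2 : ℝ))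
  have h1 : (fun x : ℝ => x * Real.exp (-x ^ 2))
      = fun x : ℝ => (C (1/2 : ℝ)).eval x * ((physP 1).eval x * Real.exp (-x ^ 2)) := by
    funext x; rw [physP_one]; simp; ring
  rw [h1, h]
  simp

lemma integral_x_sq_gauss :
    ∫ x : ℝ, x ^ 2 * Real.exp (-x ^ 2) = Real.sqrt Real.pi / 2 := by
  have h := ibp_iter 1 (C (1/2 : ℝ) * X)
  have h1 : (fun x : ℝ => x ^ 2 * Real.exp (-x ^ 2))
      = fun x : ℝ => (C (1/2 : ℝ) * X).eval x * ((physP 1).eval x * Real.exp (-x ^ 2)) := by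
    funext x; rw [physP_one]; simp; ring
  rw [h1, h]
  have h2 : (derivative^[1] (C (1/2 : ℝ) * X)) = C (1/2 : ℝ) := by simp
  rw [h2]
  have h3 : (fun x : ℝ => (C (1/2 : ℝ)).eval x * Real.exp (-x ^ 2))
      = fun x : ℝ => (1/2 : ℝ) * Real.exp (-x ^ 2) := by
    funext x; simp
  rw [h3, integral_const_mul, integral_gauss]
  ring

lemma integral_quad (D : Polynomial ℝ) (hD : D.natDegree ≤ 2) :
    ∫ x : ℝ, D.eval x * Real.exp (-x ^ 2)
      = D.coeff 0 * Real.sqrt Real.pi + D.coeff 2 * (Real.sqrt Real.pi / 2) := by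
  have hlt : D.natDegree < 3 := by omega
  have h1 : (fun x : ℝ => D.eval x * Real.exp (-x ^ 2))
      = fun x : ℝ => ∑ i ∈ Finset.range 3, D.coeff i * (x ^ i * Real.exp (-x ^ 2)) := by
    funext x
    rw [eval_eq_sum_range' hlt, Finset.sum_mul]
    exact Finset.sum_congr rfl fun i _ => by ring
  rw [h1, integral_finset_sum _ (fun i _ => (integrable_pow_gauss i).const_mul _)]
  have e0 : ∫ x : ℝ, D.coeff 0 * (x ^ 0 * Real.exp (-x ^ 2))
      = D.coeff 0 * Real.sqrt Real.pi := by
    rw [integral_const_mul]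
    congr 1
    simpa using integral_gauss
  have e1 : ∫ x : ℝ, D.coeff 1 * (x ^ 1 * Real.exp (-x ^ 2)) = 0 := by
    rw [integral_const_mul]
    simp only [pow_one]
    rw [integral_x_gauss]
    ring
  have e2 : ∫ x : ℝ, D.coeff 2 * (x ^ 2 * Real.exp (-x ^ 2))
      = D.coeff 2 * (Real.sqrt Real.pi / 2) := by
    rw [integral_const_mul, integral_x_sq_gauss]
  rw [Finset.sum_range_succ, Finset.sum_range_succ, Finset.sum_range_one, e0, e1, e2]
  ring

lemma coeff_q_mid (m : ℕ) :
    (X ^ 3 * physP m).coeff (m + 1) = -(m : ℝ) * ((m : ℝ) - 1) * 2 ^ m / 4 := by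
  rcases Nat.lt_or_ge m 2 with h | h
  · interval_cases m
    · simp [physP_zero, coeff_X_pow]
    · rw [physP_one, show (X : ℝ[X]) ^ 3 * (C 2 * X) = C 2 * X ^ 4 by ring]
      simp [coeff_C_mul, coeff_X_pow]
  · obtain ⟨j, rfl⟩ : ∃ j, m = j + 2 := ⟨m - 2, by omega⟩
    have hX : (X ^ 3 * physP (j + 2)).coeff (j + 3) = (physP (j + 2)).coeff j :=
      coeff_X_pow_mul (physP (j + 2)) 3 j
    rw [show j + 2 + 1 = j + 3 from rfl, hX, coeff_physP_sub_two]
    push_cast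
    ring

lemma coeff_q_top (m : ℕ) : (X ^ 3 * physP m).coeff (m + 3) = 2 ^ m := by
  rw [coeff_X_pow_mul (physP m) 3 m, coeff_physP_self]

theorem hermite_cubic_cross_moment' (m : ℕ) :
    ∫ x : ℝ, x ^ 3 * hermiteG m x * hermiteG (m + 1) x * Real.exp (-x ^ 2)
      = 3 * ((m : ℝ) + 1) * (2 : ℝ) ^ (((m : ℤ) + 1) - 2) * (Nat.factorial (m + 1) : ℝ)
          * Real.sqrt Real.pi := by
  have h1 : (fun x : ℝ => x ^ 3 * hermiteG m x * hermiteG (m + 1) x * Real.exp (-x ^ 2))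
      = fun x : ℝ => (X ^ 3 * physP m : Polynomial ℝ).eval x
          * ((physP (m + 1)).eval x * Real.exp (-x ^ 2)) := by
    funext x
    rw [hermiteG_eq, hermiteG_eq]
    simp only [eval_mul, eval_pow, eval_X]
    ring
  rw [h1, ibp_iter (m + 1) (X ^ 3 * physP m)]
  set q : Polynomial ℝ := X ^ 3 * physP m with hq
  set D : Polynomial ℝ := derivative^[m + 1] q with hD
  have hdegq : q.natDegree ≤ m + 3 := by
    rw [hq]
    refine natDegree_mul_le.trans ?_
    have h2 : ((X : ℝ[X]) ^ 3).natDegree ≤ 3 := natDegree_X_pow_le 3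
    have h3 := natDegree_physP m
    omega
  have hdegD : D.natDegree ≤ 2 := by
    rw [hD]
    refine (natDegree_iterate_derivative q (m + 1)).trans ?_
    omega
  rw [integral_quad D hdegD]
  have hc0 : D.coeff 0 = (Nat.factorial (m + 1) : ℝ) * q.coeff (m + 1) := by
    rw [hD, coeff_iterate_derivative, zero_add, Nat.descFactorial_self, nsmul_eq_mul]
  have hc2 : D.coeff 2 = ((m + 3).descFactorial (m + 1) : ℝ) * q.coeff (m + 3) := by
    rw [hD, coeff_iterate_derivative, show 2 + (m + 1) = m + 3 by omega, nsmul_eq_mul]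
  have hA : ((m + 3).descFactorial (m + 1) : ℝ) * 2 = ((m + 3).factorial : ℝ) := by
    have h := Nat.factorial_mul_descFactorial (show m + 1 ≤ m + 3 by omega)
    rw [show m + 3 - (m + 1) = 2 by omega] at h
    have h2 : (2 : ℕ).factorial = 2 := rfl
    rw [h2] at h
    exact_mod_cast by rw [mul_comm] at h; exact_mod_cast congrArg (Nat.cast (R := ℝ)) h
  have hF3 : ((m + 3).factorial : ℝ)
      = ((m : ℝ) + 3) * ((m : ℝ) + 2) * (Nat.factorial (m + 1) : ℝ) := by
    rw [show m + 3 = (m + 2) + 1 from rfl, Nat.factorial_succ,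
      show m + 2 = (m + 1) + 1 from rfl, Nat.factorial_succ]
    push_cast
    ring
  have hAval : ((m + 3).descFactorial (m + 1) : ℝ)
      = ((m : ℝ) + 3) * ((m : ℝ) + 2) * (Nat.factorial (m + 1) : ℝ) / 2 := by
    rw [hF3] at hA
    linarith
  have h2pow : (2 : ℝ) ^ (((m : ℤ) + 1) - 2) = 2 ^ m / 2 := by
    rw [show ((m : ℤ) + 1) - 2 = (m : ℤ) - 1 by ring,
      zpow_sub₀ (by norm_num : (2 : ℝ) ≠ 0), zpow_natCast, zpow_one]
  rw [hc0, hc2, hAval, h2pow, hq, coeff_q_mid, coeff_q_top]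
  ring

/-- Cross-moment identity: `∫ x³ G_{k-1} G_k e^{-x²} = 3k·2^{k-2} k! √π` for `k ≥ 1`. -/
theorem hermite_cubic_cross_moment (k : ℕ) (hk : 1 ≤ k) :
    ∫ x : ℝ, x ^ 3 * hermiteG (k - 1) x * hermiteG k x * Real.exp (-x ^ 2)
      = 3 * (k : ℝ) * (2 : ℝ) ^ ((k : ℤ) - 2) * (Nat.factorial k : ℝ)
          * Real.sqrt Real.pi := by
  obtain ⟨m, rfl⟩ : ∃ m, k = m + 1 := ⟨k - 1, by omega⟩
  have h := hermite_cubic_cross_moment' m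
  rw [Nat.add_sub_cancel]
  rw [h]
  push_cast
  ring
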